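/- Let M ≥ 2, N ≥ 1 be integers, 0 ≤ m ≤ M−1, α > 0, and let F̄ = √α·Q̄_m where Q̄_m is the NM-point DFT matrix with the N columns indexed {m+nM : 0 ≤ n ≤ N−1} removed. Then for every pair i ≠ j in {1,…,M}: (S_j F̄ F̄^H S_j^T) ⊗ I_N − [ (S_j F̄ F̄^H S̄_(i)^T)(I_{(M−1)N} + S̄_(i) F̄ F̄^H S̄_(i)^T)^{−1}(S̄_(i) F̄ F̄^H S_j^T) ] ⊗ I_N = Γ·I_{N²}, where Γ = ( αMN − Nα/(1+Nα) ) / (1 + MNα), and 0 < Γ < 1. -/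

import Mathlib

open Matrix Kronecker Complex

set_option maxHeartbeats 1600000

lemma geom_sum_if (K : ℕ) (z : ℂ) (hz : z ^ K = 1) :
    ∑ k : Fin K, z ^ (k : ℕ) = if z = 1 then (K : ℂ) else 0 := by
  rw [Fin.sum_univ_eq_sum_range]
  split_ifs with h
  · simp [h]
  · rw [geom_sum_eq h, hz]; simp

lemma exp_sum_dvd (K : ℕ) (hK : 0 < K) (d : ℤ) :
    ∑ k : Fin K, Complex.exp (2 * Real.pi * Complex.I * d * k / K) =
      if (K : ℤ) ∣ d then (K : ℂ) else 0 := by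
  have hKC : (K : ℂ) ≠ 0 := Nat.cast_ne_zero.mpr hK.ne'
  have hbase : ∀ k : Fin K,
      Complex.exp (2 * Real.pi * Complex.I * d * k / K)
        = (Complex.exp (2 * Real.pi * Complex.I * d / K)) ^ (k : ℕ) := by
    intro k
    rw [← Complex.exp_nat_mul]
    congr 1
    ring
  have hpow : (Complex.exp (2 * Real.pi * Complex.I * d / K)) ^ K = 1 := by
    rw [← Complex.exp_nat_mul]
    have : (K : ℂ) * (2 * Real.pi * Complex.I * d / K) = d * (2 * Real.pi * Complex.I) := by
      field_simp
    rw [this]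
    simpa using Complex.exp_int_mul_two_pi_mul_I d
  have hone : Complex.exp (2 * Real.pi * Complex.I * d / K) = 1 ↔ (K : ℤ) ∣ d := by
    rw [Complex.exp_eq_one_iff]
    constructor
    · rintro ⟨n, hn⟩
      refine ⟨n, ?_⟩
      have h2 : (2 * (Real.pi : ℂ) * Complex.I) ≠ 0 := by
        simp [Real.pi_ne_zero, Complex.I_ne_zero]
      have : (d : ℂ) = K * n := by
        field_simp at hn
        apply mul_left_cancel₀ h2
        linear_combination (2 * (Real.pi : ℂ) * Complex.I) * hn
      exact_mod_cast this
    · rintro ⟨n, rfl⟩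
      refine ⟨n, ?_⟩
      field_simp
      push_cast
      ring
  simp_rw [hbase]
  rw [geom_sum_if K _ hpow]
  simp [hone]

lemma sum_subtype_split {K n : ℕ} (P : Fin K → Prop) [DecidablePred P]
    (g : Fin n → Fin K) (hg : Function.Injective g)
    (himg : ∀ k, ¬ P k ↔ ∃ a, g a = k) (f : Fin K → ℂ) :
    ∑ k : {k : Fin K // P k}, f (k : Fin K) = (∑ k : Fin K, f k) - ∑ a : Fin n, f (g a) := by
  have hsplit : ∑ k : Fin K, f k =
      (∑ k ∈ Finset.univ.filter P, f k) + ∑ k ∈ Finset.univ.filter (fun k => ¬ P k), f k :=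
    (Finset.sum_filter_add_sum_filter_not _ _ _).symm
  have hsub : ∑ k ∈ Finset.univ.filter P, f k = ∑ k : {k : Fin K // P k}, f (k : Fin K) :=
    Finset.sum_subtype _ (by simp) f
  have himg' : Finset.univ.filter (fun k => ¬ P k) = Finset.univ.image g := by
    ext k
    simp only [Finset.mem_filter, Finset.mem_univ, true_and, Finset.mem_image]
    rw [himg k]

  have hrem : ∑ k ∈ Finset.univ.filter (fun k => ¬ P k), f k = ∑ a : Fin n, f (g a) := by
    rw [himg', Finset.sum_image (fun a _ b _ h => hg h)]
  rw [hsplit, hsub, hrem]; ring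

lemma subtype_exp_sum (M N : ℕ) (hM : 2 ≤ M) (hN : 1 ≤ N) (m : ℕ) (hm : m ≤ M - 1) (d : ℤ) :
    ∑ k : {k : Fin (N * M) // ∀ n : Fin N, (k : ℕ) ≠ m + (n : ℕ) * M},
        Complex.exp (2 * Real.pi * Complex.I * d * ((k : Fin (N * M)) : ℕ) / ((N * M : ℕ) : ℂ)) =
      (if ((N * M : ℕ) : ℤ) ∣ d then ((N * M : ℕ) : ℂ) else 0)
      - Complex.exp (2 * Real.pi * Complex.I * d * m / ((N * M : ℕ) : ℂ)) *
        (if (N : ℤ) ∣ d then (N : ℂ) else 0) := by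
  have hM0 : 0 < M := by omega
  have hN0 : 0 < N := hN
  have hNM : 0 < N * M := Nat.mul_pos hN0 hM0
  have hlt : ∀ n : Fin N, m + (n : ℕ) * M < N * M := by
    intro n
    have h1 : (n : ℕ) ≤ N - 1 := by omega
    have h3 : (n : ℕ) * M ≤ (N - 1) * M := Nat.mul_le_mul_right M h1
    have h4 : (N - 1) * M + M = N * M := by
      cases N with
      | zero => omega
      | succ n => simp [Nat.succ_sub_one, Nat.succ_mul]
    omega
  have hginj : Function.Injective (fun n : Fin N => (⟨m + (n : ℕ) * M, hlt n⟩ : Fin (N * M))) := by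
    intro a b hab
    have h1 : m + (a : ℕ) * M = m + (b : ℕ) * M := congrArg Fin.val hab
    exact Fin.ext (Nat.eq_of_mul_eq_mul_right hM0 (by omega))
  have himg : ∀ k : Fin (N * M), ¬ (∀ n : Fin N, (k : ℕ) ≠ m + (n : ℕ) * M) ↔
      ∃ a : Fin N, (⟨m + (a : ℕ) * M, hlt a⟩ : Fin (N * M)) = k := by
    intro k
    push_neg
    constructor
    · rintro ⟨n, hn⟩; exact ⟨n, Fin.ext hn.symm⟩
    · rintro ⟨n, hn⟩; exact ⟨n, (congrArg Fin.val hn).symm⟩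
  rw [sum_subtype_split _ _ hginj himg
    (fun k : Fin (N * M) => Complex.exp (2 * Real.pi * Complex.I * d * (k : ℕ) / ((N * M : ℕ) : ℂ)))]
  rw [exp_sum_dvd (N * M) hNM d]
  congr 1
  simp only [Fin.val_mk]
  have step : ∀ n : Fin N,
      Complex.exp (2 * Real.pi * Complex.I * d * ((m + (n : ℕ) * M : ℕ) : ℂ) / ((N * M : ℕ) : ℂ)) =
        Complex.exp (2 * Real.pi * Complex.I * d * m / ((N * M : ℕ) : ℂ)) *
          Complex.exp (2 * Real.pi * Complex.I * d * (n : ℕ) / (N : ℂ)) := by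
    intro n
    rw [← Complex.exp_add]
    congr 1
    have hNne : (N : ℂ) ≠ 0 := Nat.cast_ne_zero.mpr hN0.ne'
    have hMne : (M : ℂ) ≠ 0 := Nat.cast_ne_zero.mpr hM0.ne'
    push_cast
    field_simp
  simp_rw [step, ← Finset.mul_sum]
  rw [exp_sum_dvd N hN0 d]

noncomputable def vChar (M m j : ℕ) : ℂ :=
  Complex.exp (2 * Real.pi * Complex.I * j * m / M)

lemma conj_vChar (M m j : ℕ) :
    (starRingEnd ℂ) (vChar M m j) = Complex.exp (-(2 * Real.pi * Complex.I * j * m / M)) := by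
  rw [vChar, ← Complex.exp_conj]
  congr 1
  simp [map_div₀, map_ofNat]
  try ring

lemma vChar_mul_conj (M m j : ℕ) : vChar M m j * (starRingEnd ℂ) (vChar M m j) = 1 := by
  rw [conj_vChar, vChar, ← Complex.exp_add, add_neg_cancel, Complex.exp_zero]

lemma gram (M N : ℕ) (hM : 2 ≤ M) (hN : 1 ≤ N) (m : ℕ) (hm : m ≤ M - 1)
    (Qbar : Matrix (Fin M × Fin N)
      {k : Fin (N * M) // ∀ n : Fin N, (k : ℕ) ≠ m + (n : ℕ) * M} ℂ)
    (hQbar : ∀ (j : Fin M) (b : Fin N)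
        (k : {k : Fin (N * M) // ∀ n : Fin N, (k : ℕ) ≠ m + (n : ℕ) * M}),
      Qbar (j, b) k =
        Complex.exp (-(2 * (Real.pi : ℂ) * Complex.I *
          ((((j : ℕ) * N + (b : ℕ)) * ((k : Fin (N * M)) : ℕ) : ℕ) : ℂ)) / ((N * M : ℕ) : ℂ)))
    (j j' : Fin M) (b b' : Fin N) :
    (Qbar * Qbarᴴ) (j, b) (j', b') =
      (if j = j' ∧ b = b' then ((N * M : ℕ) : ℂ) else 0)
      - (if b = b' then (N : ℂ) * (vChar M m j' * (starRingEnd ℂ) (vChar M m j)) else 0) := by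
  have hM0 : 0 < M := by omega
  have hN0 : 0 < N := hN
  have hNC : (N : ℂ) ≠ 0 := Nat.cast_ne_zero.mpr hN0.ne'
  have hMC : (M : ℂ) ≠ 0 := Nat.cast_ne_zero.mpr hM0.ne'
  set d : ℤ := (((j' : ℕ) * N + (b' : ℕ) : ℕ) : ℤ) - (((j : ℕ) * N + (b : ℕ) : ℕ) : ℤ) with hd
  have hterm : ∀ k : {k : Fin (N * M) // ∀ n : Fin N, (k : ℕ) ≠ m + (n : ℕ) * M},
      Qbar (j, b) k * (starRingEnd ℂ) (Qbar (j', b') k) =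
        Complex.exp (2 * Real.pi * Complex.I * d * ((k : Fin (N * M)) : ℕ) / ((N * M : ℕ) : ℂ)) := by
    intro k
    rw [hQbar, hQbar, ← Complex.exp_conj, ← Complex.exp_add]
    congr 1
    have : (starRingEnd ℂ) (-(2 * (Real.pi : ℂ) * Complex.I *
          ((((j' : ℕ) * N + (b' : ℕ)) * ((k : Fin (N * M)) : ℕ) : ℕ) : ℂ)) / ((N * M : ℕ) : ℂ))
        = (2 * (Real.pi : ℂ) * Complex.I *
          ((((j' : ℕ) * N + (b' : ℕ)) * ((k : Fin (N * M)) : ℕ) : ℕ) : ℂ)) / ((N * M : ℕ) : ℂ) := by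
      simp [map_div₀, map_ofNat]
      try ring
    rw [this, ← add_div]
    rw [div_eq_div_iff (by exact_mod_cast (Nat.mul_pos hN0 hM0).ne') (by exact_mod_cast (Nat.mul_pos hN0 hM0).ne')]
    push_cast [hd]
    ring
  rw [Matrix.mul_apply]
  simp_rw [Matrix.conjTranspose_apply, RCLike.star_def]
  rw [Finset.sum_congr rfl (fun k _ => hterm k)]
  rw [subtype_exp_sum M N hM hN m hm d]
  -- bounds
  have hjb : (j : ℕ) * N + (b : ℕ) < N * M := by
    have h1 : (j : ℕ) * N ≤ (M - 1) * N := Nat.mul_le_mul_right N (by omega)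
    have h2 : (M - 1) * N + N = M * N := by
      cases M with
      | zero => omega
      | succ M => simp [Nat.succ_sub_one, Nat.succ_mul]
    have := b.isLt
    have := Nat.mul_comm N M
    omega
  have hjb' : (j' : ℕ) * N + (b' : ℕ) < N * M := by
    have h1 : (j' : ℕ) * N ≤ (M - 1) * N := Nat.mul_le_mul_right N (by omega)
    have h2 : (M - 1) * N + N = M * N := by
      cases M with
      | zero => omega
      | succ M => simp [Nat.succ_sub_one, Nat.succ_mul]
    have := b'.isLt
    have := Nat.mul_comm N M
    omega
  have h1 : ((N * M : ℕ) : ℤ) ∣ d ↔ (j = j' ∧ b = b') := by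
    constructor
    · intro hdvd
      have hd0 : d = 0 := Int.eq_zero_of_abs_lt_dvd hdvd (by
        rw [abs_lt]
        constructor <;> [skip; skip] <;> (rw [hd]; push_cast; omega))
      have hll : (j : ℕ) * N + (b : ℕ) = (j' : ℕ) * N + (b' : ℕ) := by
        rw [hd] at hd0; omega
      have hbb : (b : ℕ) = (b' : ℕ) := by
        have e1 : ((j : ℕ) * N + (b : ℕ)) % N = (b : ℕ) := by
          simp [Nat.add_mod, Nat.mul_mod_left, Nat.mul_mod_right, Nat.mod_eq_of_lt b.isLt]
        have e2 : ((j' : ℕ) * N + (b' : ℕ)) % N = (b' : ℕ) := by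
          simp [Nat.add_mod, Nat.mul_mod_left, Nat.mul_mod_right, Nat.mod_eq_of_lt b'.isLt]
        rw [hll] at e1
        omega
      have hjj : (j : ℕ) = (j' : ℕ) := Nat.eq_of_mul_eq_mul_right hN0 (by omega)
      exact ⟨Fin.ext hjj, Fin.ext hbb⟩
    · rintro ⟨rfl, rfl⟩
      simp [hd]
  have h2 : (N : ℤ) ∣ d ↔ b = b' := by
    have hdeq : d = ((j' : ℤ) - (j : ℤ)) * N + ((b' : ℤ) - (b : ℤ)) := by rw [hd]; push_cast; ring
    rw [hdeq]
    rw [dvd_add_right (dvd_mul_left (N : ℤ) _)]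
    constructor
    · intro hdvd
      have : ((b' : ℤ) - (b : ℤ)) = 0 := Int.eq_zero_of_abs_lt_dvd hdvd (by
        rw [abs_lt]
        have := b.isLt; have := b'.isLt
        constructor <;> (push_cast; omega))
      have : (b : ℕ) = (b' : ℕ) := by omega
      exact Fin.ext this
    · rintro rfl; simp
  rw [if_congr h1 rfl rfl]
  congr 1
  by_cases hbb : b = b'
  · subst hbb
    rw [if_pos (h2.mpr rfl), if_pos rfl, mul_comm]
    congr 1
    rw [conj_vChar, vChar, ← Complex.exp_add]
    congr 1
    have hdeq : d = ((j' : ℤ) - (j : ℤ)) * N := by rw [hd]; push_cast; ring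
    rw [hdeq]
    field_simp
    push_cast
    ring
  · rw [if_neg (fun h => hbb (h2.mp h)), if_neg hbb, mul_zero]

lemma diag_mul_sum {L : Type*} [Fintype L] {n : ℕ} (e f : L → ℂ) (b b' : Fin n) :
    ∑ q : L × Fin n, (if b = q.2 then e q.1 else 0) * (if q.2 = b' then f q.1 else 0) =
      if b = b' then ∑ c : L, e c * f c else 0 := by
  rw [Fintype.sum_prod_type]
  have inner : ∀ c : L, ∑ b'' : Fin n, (if b = b'' then e c else 0) * (if b'' = b' then f c else 0)
      = if b = b' then e c * f c else 0 := by
    intro c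
    rw [Finset.sum_eq_single b]
    · rw [if_pos rfl]
      split_ifs <;> simp
    · intro x _ hx
      rw [if_neg (fun h => hx h.symm), zero_mul]
    · intro h; exact absurd (Finset.mem_univ b) h
  simp_rw [inner]
  split_ifs <;> simp

/-- The matrix `I_{M,i} ∈ ℂ^{(M-1)×M}`: the identity matrix `I_M` with its `i`-th row
removed. -/
noncomputable def rowRemoved (M : ℕ) (i : Fin M) : Matrix (Fin (M - 1)) (Fin M) ℂ :=
  Matrix.of fun j k =>
    if (k : ℕ) = (if (j : ℕ) < (i : ℕ) then (j : ℕ) else (j : ℕ) + 1) then 1 else 0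

/-- `S̄_(i) = I_{M,i} ⊗ I_N`. -/
noncomputable def sBar (M N : ℕ) (i : Fin M) :
    Matrix (Fin (M - 1) × Fin N) (Fin M × Fin N) ℂ :=
  rowRemoved M i ⊗ₖ (1 : Matrix (Fin N) (Fin N) ℂ)

/-- `S_i = e_iᵀ ⊗ I_N ∈ ℂ^{N × MN}`, the selection matrix of user `i`. -/
noncomputable def sSel (M N : ℕ) (i : Fin M) : Matrix (Fin N) (Fin M × Fin N) ℂ :=
  Matrix.of fun b jc => if jc.1 = i ∧ jc.2 = b then 1 else 0


/-- with `F̄ = √α·Q̄_m`, for every `i ≠ j`,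
`(S_j F̄ F̄ᴴ S_jᵀ) ⊗ I_N − [(S_j F̄ F̄ᴴ S̄_(i)ᵀ)(I + S̄_(i) F̄ F̄ᴴ S̄_(i)ᵀ)⁻¹(S̄_(i) F̄ F̄ᴴ S_jᵀ)] ⊗ I_N
 = Γ·I_{N²}`, where `Γ = (αMN − Nα/(1+Nα))/(1+MNα) ∈ (0,1)`. -/

theorem stmt_16 (M N : ℕ) (hM : 2 ≤ M) (hN : 1 ≤ N) (m : ℕ) (hm : m ≤ M - 1)
    (α : ℝ) (hα : 0 < α)
    (Qbar : Matrix (Fin M × Fin N)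
      {k : Fin (N * M) // ∀ n : Fin N, (k : ℕ) ≠ m + (n : ℕ) * M} ℂ)
    (hQbar : ∀ (j : Fin M) (b : Fin N)
        (k : {k : Fin (N * M) // ∀ n : Fin N, (k : ℕ) ≠ m + (n : ℕ) * M}),
      Qbar (j, b) k =
        Complex.exp (-(2 * (Real.pi : ℂ) * Complex.I *
          ((((j : ℕ) * N + (b : ℕ)) * ((k : Fin (N * M)) : ℕ) : ℕ) : ℂ)) / ((N * M : ℕ) : ℂ)))
    (F : Matrix (Fin M × Fin N)
      {k : Fin (N * M) // ∀ n : Fin N, (k : ℕ) ≠ m + (n : ℕ) * M} ℂ)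
    (hF : F = ((Real.sqrt α : ℝ) : ℂ) • Qbar)
    (Γ : ℝ)
    (hΓ : Γ = (α * M * N - N * α / (1 + (N : ℝ) * α)) / (1 + (M : ℝ) * N * α)) :
    0 < Γ ∧ Γ < 1 ∧
      ∀ i j : Fin M, i ≠ j →
        (sSel M N j * F * Fᴴ * (sSel M N j)ᵀ) ⊗ₖ (1 : Matrix (Fin N) (Fin N) ℂ) -
            ((sSel M N j * F * Fᴴ * (sBar M N i)ᵀ) *
                ((1 : Matrix (Fin (M - 1) × Fin N) (Fin (M - 1) × Fin N) ℂ) +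
                  sBar M N i * F * Fᴴ * (sBar M N i)ᵀ)⁻¹ *
                (sBar M N i * F * Fᴴ * (sSel M N j)ᵀ)) ⊗ₖ
              (1 : Matrix (Fin N) (Fin N) ℂ) =
          ((Γ : ℂ)) • (1 : Matrix ((Fin N × Fin N)) ((Fin N × Fin N)) ℂ) := by
  have hNR : (1 : ℝ) ≤ (N : ℝ) := by exact_mod_cast hN
  have hMR : (2 : ℝ) ≤ (M : ℝ) := by exact_mod_cast hM
  have hd1 : (0 : ℝ) < 1 + (N : ℝ) * α := by positivity
  have hd2 : (0 : ℝ) < 1 + (M : ℝ) * N * α := by positivity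
  have hq : (0 : ℝ) < N * α / (1 + (N : ℝ) * α) := by positivity
  have hq2 : N * α / (1 + (N : ℝ) * α) < N * α := by
    apply div_lt_self (by nlinarith)
    nlinarith
  refine ⟨?_, ?_, ?_⟩
  · rw [hΓ]
    apply div_pos _ hd2
    nlinarith
  · rw [hΓ]
    rw [div_lt_one hd2]
    nlinarith
  intro i j hij
  -- complex nonzero denominators
  have hc1 : (1 + (α : ℂ) * N * M) ≠ 0 := by
    have h : (1 + (α : ℂ) * N * M) = ((1 + α * N * M : ℝ) : ℂ) := by push_cast; ring
    rw [h]
    exact Complex.ofReal_ne_zero.mpr (by nlinarith)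
  have hc2 : (1 + (α : ℂ) * N) ≠ 0 := by
    have h : (1 + (α : ℂ) * N) = ((1 + α * N : ℝ) : ℂ) := by push_cast; ring
    rw [h]
    exact Complex.ofReal_ne_zero.mpr (by nlinarith)
  have hNC : (N : ℂ) ≠ 0 := Nat.cast_ne_zero.mpr (by omega)
  have hMC : (M : ℂ) ≠ 0 := Nat.cast_ne_zero.mpr (by omega)
  -- Gram matrix of F
  have hFF : F * Fᴴ = (α : ℂ) • (Qbar * Qbarᴴ) := by
    rw [hF, Matrix.conjTranspose_smul, Matrix.smul_mul, Matrix.mul_smul, smul_smul]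
    congr 1
    rw [Complex.star_def, Complex.conj_ofReal, ← Complex.ofReal_mul, Real.mul_self_sqrt hα.le]
  have gram' : ∀ (jj jj' : Fin M) (bb bb' : Fin N),
      (F * Fᴴ) (jj, bb) (jj', bb') =
        (α : ℂ) * ((if jj = jj' ∧ bb = bb' then (N : ℂ) * M else 0)
          - (if bb = bb' then (N : ℂ) * (vChar M m jj' * (starRingEnd ℂ) (vChar M m jj)) else 0)) := by
    intro jj jj' bb bb'
    rw [hFF, Matrix.smul_apply, gram M N hM hN m hm Qbar hQbar]
    congr 2
    split_ifs <;> push_cast <;> ring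
  -- the embedding of Fin (M-1) into Fin M avoiding i
  have hembval : ∀ c : Fin (M - 1), (if (c : ℕ) < (i : ℕ) then (c : ℕ) else (c : ℕ) + 1) < M := by
    intro c
    have := c.isLt
    have := i.isLt
    split_ifs <;> omega
  set emb : Fin (M - 1) → Fin M := fun c =>
    ⟨if (c : ℕ) < (i : ℕ) then (c : ℕ) else (c : ℕ) + 1, hembval c⟩ with hemb
  have hembinj : Function.Injective emb := by
    intro a b h
    have h2 := congrArg Fin.val h
    simp only [hemb] at h2
    apply Fin.ext
    split_ifs at h2 <;> omega
  have hp : ∃ p : Fin (M - 1), emb p = j := by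
    by_cases hji : (j : ℕ) < (i : ℕ)
    · have hi := i.isLt
      refine ⟨⟨(j : ℕ), by omega⟩, Fin.ext ?_⟩
      simp only [hemb]
      split_ifs <;> simp_all <;> omega
    · have hij' : (i : ℕ) < (j : ℕ) := by
        rcases Nat.lt_or_ge (i : ℕ) (j : ℕ) with h | h
        · exact h
        · exact absurd (Fin.ext (by omega : (i : ℕ) = (j : ℕ))) hij
      have hj := j.isLt
      refine ⟨⟨(j : ℕ) - 1, by omega⟩, Fin.ext ?_⟩
      simp only [hemb]
      split_ifs <;> simp_all <;> omega
  obtain ⟨p, hp⟩ := hp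
  -- scalar data
  set vj : ℂ := vChar M m (j : ℕ) with hvj
  set w : Fin (M - 1) → ℂ := fun c => vChar M m ((emb c : Fin M) : ℕ) with hw
  have hv1 : vj * (starRingEnd ℂ) vj = 1 := vChar_mul_conj M m j
  have hw1 : ∀ c, w c * (starRingEnd ℂ) (w c) = 1 := fun c => vChar_mul_conj M m _
  have hvne : vj ≠ 0 := by
    intro h
    rw [h] at hv1; simp at hv1
  have hconj : (starRingEnd ℂ) vj = vj⁻¹ := (inv_eq_of_mul_eq_one_right hv1).symm
  have hwp : w p = vj := by
    rw [show w p = vChar M m ((emb p : Fin M) : ℕ) from rfl, hp]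
  have hwne : ∀ c, w c ≠ 0 := by
    intro c h
    have := hw1 c
    rw [h] at this; simp at this
  have hwconj : ∀ c, (starRingEnd ℂ) (w c) = (w c)⁻¹ :=
    fun c => (inv_eq_of_mul_eq_one_right (hw1 c)).symm
  -- canonical sums
  have hsingle : ∀ (c0 : Fin (M - 1)) (f : Fin (M - 1) → ℂ),
      ∑ c : Fin (M - 1), (if c0 = c then f c else 0) = f c0 := by
    intro c0 f
    rw [Finset.sum_eq_single c0]
    · rw [if_pos rfl]
    · intro x _ hx; rw [if_neg (fun h => hx h.symm)]
    · intro h; exact absurd (Finset.mem_univ c0) h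
  have hsemb : ∀ (f : Fin (M - 1) → ℂ),
      ∑ c : Fin (M - 1), (if j = emb c then f c else 0) = f p := by
    intro f
    rw [Finset.sum_eq_single p]
    · rw [if_pos hp.symm]
    · intro x _ hx
      rw [if_neg]
      intro h
      exact hx (hembinj (h.symm.trans hp.symm))
    · intro h; exact absurd (Finset.mem_univ p) h
  have hsw : ∑ c : Fin (M - 1), (w c * (starRingEnd ℂ) (w c)) = (M : ℂ) - 1 := by
    rw [Finset.sum_congr rfl (fun c _ => hw1 c)]
    simp
    have : ((M - 1 : ℕ) : ℂ) = (M : ℂ) - 1 := by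
      push_cast [Nat.cast_sub (by omega : 1 ≤ M)]
      ring
    rw [this]
  -- matrix entry lemmas
  have hsSel_apply : ∀ (b : Fin N) (q : Fin M × Fin N),
      sSel M N j b q = if q = (j, b) then 1 else 0 := by
    rintro b ⟨q1, q2⟩
    show (if q1 = j ∧ q2 = b then (1:ℂ) else 0) = _
    simp [Prod.ext_iff]
  have hsBar_apply : ∀ (c : Fin (M - 1)) (b : Fin N) (q : Fin M × Fin N),
      sBar M N i (c, b) q = if q = (emb c, b) then 1 else 0 := by
    rintro c b ⟨q1, q2⟩
    show rowRemoved M i c q1 * (1 : Matrix (Fin N) (Fin N) ℂ) b q2 = _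
    rw [rowRemoved]
    simp only [Matrix.of_apply, Matrix.one_apply, Prod.ext_iff]
    have hval : ((q1 : ℕ) = if (c : ℕ) < (i : ℕ) then (c : ℕ) else (c : ℕ) + 1) = (q1 = emb c) :=
      propext ⟨fun h => Fin.ext h, fun h => congrArg Fin.val h⟩
    simp only [hval]
    split_ifs <;> simp_all
  set G : Matrix (Fin M × Fin N) (Fin M × Fin N) ℂ := F * Fᴴ with hG
  have hselG : ∀ (b : Fin N) (q : Fin M × Fin N), (sSel M N j * G) b q = G (j, b) q := by
    intro b q
    rw [Matrix.mul_apply]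
    rw [Finset.sum_eq_single (j, b)]
    · rw [hsSel_apply, if_pos rfl, one_mul]
    · intro x _ hx; rw [hsSel_apply, if_neg hx, zero_mul]
    · intro h; exact absurd (Finset.mem_univ _) h
  have hbarG : ∀ (c : Fin (M - 1)) (b : Fin N) (q : Fin M × Fin N),
      (sBar M N i * G) (c, b) q = G (emb c, b) q := by
    intro c b q
    rw [Matrix.mul_apply]
    rw [Finset.sum_eq_single (emb c, b)]
    · rw [hsBar_apply, if_pos rfl, one_mul]
    · intro x _ hx; rw [hsBar_apply, if_neg hx, zero_mul]
    · intro h; exact absurd (Finset.mem_univ _) h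
  -- scalar block data
  set u : Fin (M - 1) → ℂ := fun c =>
    (α : ℂ) * ((if j = emb c then (N : ℂ) * M else 0)
      - (N : ℂ) * (w c * (starRingEnd ℂ) vj)) with hu
  set u' : Fin (M - 1) → ℂ := fun c =>
    (α : ℂ) * ((if j = emb c then (N : ℂ) * M else 0)
      - (N : ℂ) * (vj * (starRingEnd ℂ) (w c))) with hu'
  -- block entry formulas
  have hA : ∀ (b b' : Fin N), (sSel M N j * G * (sSel M N j)ᵀ) b b' =
      if b = b' then (α : ℂ) * ((N : ℂ) * M - N) else 0 := by
    intro b b'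
    rw [Matrix.mul_apply]
    rw [Finset.sum_eq_single (j, b')]
    · rw [Matrix.transpose_apply, hsSel_apply, if_pos rfl, mul_one, hselG, gram']
      rw [show vChar M m ((j : Fin M) : ℕ) = vj from rfl]
      by_cases hbb : b = b'
      · rw [if_pos ⟨rfl, hbb⟩, if_pos hbb, if_pos hbb, hv1, mul_one]
      · rw [if_neg (fun h => hbb h.2), if_neg hbb, if_neg hbb]
        ring
    · intro x _ hx
      rw [Matrix.transpose_apply, hsSel_apply, if_neg hx, mul_zero]
    · intro h; exact absurd (Finset.mem_univ _) h
  have hP : ∀ (b : Fin N) (q : Fin (M - 1) × Fin N),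
      (sSel M N j * G * (sBar M N i)ᵀ) b q = if b = q.2 then u q.1 else 0 := by
    rintro b ⟨c, b'⟩
    rw [Matrix.mul_apply]
    rw [Finset.sum_eq_single (emb c, b')]
    · rw [Matrix.transpose_apply, hsBar_apply, if_pos rfl, mul_one, hselG, gram']
      rw [show vChar M m ((j : Fin M) : ℕ) = vj from rfl,
        show vChar M m ((emb c : Fin M) : ℕ) = w c from rfl]
      rw [hu]
      by_cases hbb : b = b'
      · subst hbb; simp
      · rw [if_neg (fun h => hbb h.2), if_neg hbb, if_neg hbb]
        ring
    · intro x _ hx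
      rw [Matrix.transpose_apply, hsBar_apply, if_neg hx, mul_zero]
    · intro h; exact absurd (Finset.mem_univ _) h
  have hR : ∀ (q : Fin (M - 1) × Fin N) (b' : Fin N),
      (sBar M N i * G * (sSel M N j)ᵀ) q b' = if q.2 = b' then u' q.1 else 0 := by
    rintro ⟨c, b⟩ b'
    rw [Matrix.mul_apply]
    rw [Finset.sum_eq_single (j, b')]
    · rw [Matrix.transpose_apply, hsSel_apply, if_pos rfl, mul_one, hbarG, gram']
      rw [show vChar M m ((j : Fin M) : ℕ) = vj from rfl,
        show vChar M m ((emb c : Fin M) : ℕ) = w c from rfl]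
      rw [hu']
      by_cases hbb : b = b'
      · subst hbb
        have hsym : (emb c = j) = (j = emb c) := propext ⟨Eq.symm, Eq.symm⟩
        simp [hsym]
      · rw [if_neg (fun h => hbb h.2), if_neg hbb, if_neg hbb]
        ring
    · intro x _ hx
      rw [Matrix.transpose_apply, hsSel_apply, if_neg hx, mul_zero]
    · intro h; exact absurd (Finset.mem_univ _) h
  have hBm : ∀ (c : Fin (M - 1)) (b : Fin N) (q : Fin (M - 1) × Fin N),
      (sBar M N i * G * (sBar M N i)ᵀ) (c, b) q =
        if b = q.2 then (α : ℂ) * ((if c = q.1 then (N : ℂ) * M else 0)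
          - (N : ℂ) * (w q.1 * (starRingEnd ℂ) (w c))) else 0 := by
    rintro c b ⟨c', b'⟩
    rw [Matrix.mul_apply]
    rw [Finset.sum_eq_single (emb c', b')]
    · rw [Matrix.transpose_apply, hsBar_apply, if_pos rfl, mul_one, hbarG, gram']
      rw [show vChar M m ((emb c : Fin M) : ℕ) = w c from rfl,
        show vChar M m ((emb c' : Fin M) : ℕ) = w c' from rfl]
      have hee : (emb c = emb c') = (c = c') :=
        propext ⟨fun h => hembinj h, fun h => h ▸ rfl⟩
      by_cases hbb : b = b'
      · subst hbb
        simp [hee]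
      · rw [if_neg (fun h => hbb h.2), if_neg hbb, if_neg hbb]
        ring
    · intro x _ hx
      rw [Matrix.transpose_apply, hsBar_apply, if_neg hx, mul_zero]
    · intro h; exact absurd (Finset.mem_univ _) h
  -- explicit inverse
  set DD : Fin (M - 1) → Fin (M - 1) → ℂ := fun c c' =>
    (1 / (1 + (α : ℂ) * N * M)) * ((if c = c' then 1 else 0)
      + ((α : ℂ) * N / (1 + (α : ℂ) * N)) * ((starRingEnd ℂ) (w c) * w c')) with hDD
  set D : Matrix (Fin (M - 1) × Fin N) (Fin (M - 1) × Fin N) ℂ :=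
    Matrix.of fun q q' => if q.2 = q'.2 then DD q.1 q'.1 else 0 with hD
  have hDapp : ∀ q q' : Fin (M - 1) × Fin N, D q q' = if q.2 = q'.2 then DD q.1 q'.1 else 0 :=
    fun _ _ => rfl
  set E : Fin (M - 1) → Fin (M - 1) → ℂ := fun c c'' =>
    (if c = c'' then 1 else 0) + (α : ℂ) * ((if c = c'' then (N : ℂ) * M else 0)
      - (N : ℂ) * (w c'' * (starRingEnd ℂ) (w c))) with hE
  have hIB : ∀ (c : Fin (M - 1)) (b : Fin N) (q : Fin (M - 1) × Fin N),
      ((1 : Matrix (Fin (M - 1) × Fin N) (Fin (M - 1) × Fin N) ℂ)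
        + sBar M N i * G * (sBar M N i)ᵀ) (c, b) q = if b = q.2 then E c q.1 else 0 := by
    rintro c b ⟨c'', b''⟩
    rw [Matrix.add_apply, hBm c b (c'', b''), Matrix.one_apply]
    by_cases hbb : b = b''
    · subst hbb
      simp [hE, Prod.ext_iff]
    · simp [hbb, Prod.ext_iff]
  have hsingle' : ∀ (c0 : Fin (M - 1)) (f : Fin (M - 1) → ℂ),
      ∑ c : Fin (M - 1), (if c = c0 then f c else 0) = f c0 := by
    intro c0 f
    rw [Finset.sum_eq_single c0]
    · rw [if_pos rfl]
    · intro x _ hx; rw [if_neg hx]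
    · intro h; exact absurd (Finset.mem_univ c0) h
  have hSum1 : ∀ c c' : Fin (M - 1),
      ∑ c'' : Fin (M - 1), E c c'' * DD c'' c' = if c = c' then 1 else 0 := by
    intro c c'
    have point : ∀ c'' : Fin (M - 1), E c c'' * DD c'' c' =
        (if c = c'' then (1 + (α : ℂ) * N * M) * ((1 / (1 + (α : ℂ) * N * M)) *
          ((if c'' = c' then 1 else 0)
            + ((α : ℂ) * N / (1 + (α : ℂ) * N)) * ((starRingEnd ℂ) (w c'') * w c'))) else 0)
        + ((if c'' = c' then (-((1 / (1 + (α : ℂ) * N * M)) * α * N)) * (w c'' * (starRingEnd ℂ) (w c)) else 0)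
        + (-((1 / (1 + (α : ℂ) * N * M)) * α * N * ((α : ℂ) * N / (1 + (α : ℂ) * N))))
            * (w c'' * (starRingEnd ℂ) (w c'')) * ((starRingEnd ℂ) (w c) * w c')) := by
      intro c''
      simp only [hE, hDD]
      split_ifs <;> ring
    rw [Finset.sum_congr rfl (fun c'' _ => point c'')]
    rw [Finset.sum_add_distrib]
    rw [Finset.sum_add_distrib]
    rw [hsingle c, hsingle' c']
    have e3 : ∑ c'' : Fin (M - 1),
        (-((1 / (1 + (α : ℂ) * N * M)) * α * N * ((α : ℂ) * N / (1 + (α : ℂ) * N))))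
          * (w c'' * (starRingEnd ℂ) (w c'')) * ((starRingEnd ℂ) (w c) * w c') =
        (-((1 / (1 + (α : ℂ) * N * M)) * α * N * ((α : ℂ) * N / (1 + (α : ℂ) * N))))
          * ((M : ℂ) - 1) * ((starRingEnd ℂ) (w c) * w c') := by
      rw [← Finset.sum_mul, ← Finset.mul_sum, hsw]
    rw [e3]
    split_ifs with hcc
    · field_simp
      ring
    · field_simp
      ring
  have hRight : ((1 : Matrix (Fin (M - 1) × Fin N) (Fin (M - 1) × Fin N) ℂ)
      + sBar M N i * G * (sBar M N i)ᵀ) * D = 1 := by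
    ext q q'
    obtain ⟨c, b⟩ := q
    obtain ⟨c', b'⟩ := q'
    rw [Matrix.mul_apply]
    rw [Finset.sum_congr rfl (fun q _ => by rw [hIB c b q, hDapp q (c', b')])]
    rw [diag_mul_sum (E c) (fun c'' => DD c'' c') b b']
    rw [hSum1 c c', Matrix.one_apply]
    by_cases hbb : b = b' <;> by_cases hcc : c = c' <;> simp_all [Prod.ext_iff]
  have hInv : ((1 : Matrix (Fin (M - 1) × Fin N) (Fin (M - 1) × Fin N) ℂ)
      + sBar M N i * G * (sBar M N i)ᵀ)⁻¹ = D := Matrix.inv_eq_right_inv hRight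
  -- product entries
  have hPD : ∀ (b : Fin N) (q' : Fin (M - 1) × Fin N),
      ((sSel M N j * G * (sBar M N i)ᵀ) * D) b q' =
        if b = q'.2 then ∑ c : Fin (M - 1), u c * DD c q'.1 else 0 := by
    rintro b ⟨c', b'⟩
    rw [Matrix.mul_apply]
    rw [Finset.sum_congr rfl (fun q _ => by rw [hP b q, hDapp q (c', b')])]
    exact diag_mul_sum u (fun c => DD c c') b b'
  have hPDR : ∀ (b b' : Fin N),
      ((sSel M N j * G * (sBar M N i)ᵀ) * D * (sBar M N i * G * (sSel M N j)ᵀ)) b b' =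
        if b = b' then
          ∑ c' : Fin (M - 1), (∑ c : Fin (M - 1), u c * DD c c') * u' c' else 0 := by
    intro b b'
    rw [Matrix.mul_apply]
    rw [Finset.sum_congr rfl (fun q _ => by rw [hPD b q, hR q b'])]
    exact diag_mul_sum (fun c' => ∑ c : Fin (M - 1), u c * DD c c') u' b b'
  -- the key scalar sum
  set Cw : ℂ := (α : ℂ) * ((N : ℂ) * M) * ((1 / (1 + (α : ℂ) * N * M)) * ((α : ℂ) * N / (1 + (α : ℂ) * N)))
    - (1 / (1 + (α : ℂ) * N * M)) * α * N
    - ((1 / (1 + (α : ℂ) * N * M)) * α * N * ((α : ℂ) * N / (1 + (α : ℂ) * N))) * ((M : ℂ) - 1) with hCw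
  set S : Fin (M - 1) → ℂ := fun c' =>
    (if p = c' then ((α : ℂ) * ((N : ℂ) * M)) * (1 / (1 + (α : ℂ) * N * M)) else 0)
    + Cw * ((starRingEnd ℂ) vj * w c') with hS
  have hSum2 : ∀ c' : Fin (M - 1), ∑ c : Fin (M - 1), u c * DD c c' = S c' := by
    intro c'
    have point2 : ∀ c : Fin (M - 1), u c * DD c c' =
        (if j = emb c then ((α : ℂ) * ((N : ℂ) * M)) * ((1 / (1 + (α : ℂ) * N * M)) *
            ((if c = c' then 1 else 0)
              + ((α : ℂ) * N / (1 + (α : ℂ) * N)) * ((starRingEnd ℂ) (w c) * w c'))) else 0)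
        + ((if c = c' then (-((1 / (1 + (α : ℂ) * N * M)) * α * N)) * (w c * (starRingEnd ℂ) vj) else 0)
        + (-((1 / (1 + (α : ℂ) * N * M)) * α * N * ((α : ℂ) * N / (1 + (α : ℂ) * N))))
            * (w c * (starRingEnd ℂ) (w c)) * ((starRingEnd ℂ) vj * w c')) := by
      intro c
      simp only [hu, hDD]
      split_ifs <;> ring
    rw [Finset.sum_congr rfl (fun c _ => point2 c)]
    rw [Finset.sum_add_distrib]
    rw [Finset.sum_add_distrib]
    rw [hsemb, hsingle' c']
    have e3 : ∑ c : Fin (M - 1),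
        (-((1 / (1 + (α : ℂ) * N * M)) * α * N * ((α : ℂ) * N / (1 + (α : ℂ) * N))))
          * (w c * (starRingEnd ℂ) (w c)) * ((starRingEnd ℂ) vj * w c') =
        (-((1 / (1 + (α : ℂ) * N * M)) * α * N * ((α : ℂ) * N / (1 + (α : ℂ) * N))))
          * ((M : ℂ) - 1) * ((starRingEnd ℂ) vj * w c') := by
      rw [← Finset.sum_mul, ← Finset.mul_sum, hsw]
    rw [e3]
    simp only [hS, hCw]
    have hwpc : (starRingEnd ℂ) (w p) = (starRingEnd ℂ) vj := congrArg _ hwp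
    rw [hwpc]
    by_cases hpc : p = c'
    · rw [if_pos hpc, if_pos hpc]
      ring
    · rw [if_neg hpc, if_neg hpc]
      ring
  have hu'p : u' p = (α : ℂ) * ((N : ℂ) * M - N * (vj * (starRingEnd ℂ) vj)) := by
    simp only [hu']
    rw [if_pos hp.symm, hwp]
  have hT : ∑ c' : Fin (M - 1), (∑ c : Fin (M - 1), u c * DD c c') * u' c' =
      (((α : ℂ) * ((N : ℂ) * M)) * (1 / (1 + (α : ℂ) * N * M))) * ((α : ℂ) * ((N : ℂ) * M - N * (vj * (starRingEnd ℂ) vj)))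
      + (Cw * ((α : ℂ) * ((N : ℂ) * M))) * ((starRingEnd ℂ) vj * vj)
      + (-(Cw * α * N)) * ((starRingEnd ℂ) vj * vj) * ((M : ℂ) - 1) := by
    rw [Finset.sum_congr rfl (fun c' _ => by rw [hSum2 c'])]
    have point3 : ∀ c' : Fin (M - 1), S c' * u' c' =
        (if p = c' then (((α : ℂ) * ((N : ℂ) * M)) * (1 / (1 + (α : ℂ) * N * M))) * u' c' else 0)
        + ((if j = emb c' then (Cw * ((α : ℂ) * ((N : ℂ) * M))) * ((starRingEnd ℂ) vj * w c') else 0)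
        + (-(Cw * α * N)) * ((starRingEnd ℂ) vj * vj) * (w c' * (starRingEnd ℂ) (w c'))) := by
      intro c'
      simp only [hS, hu']
      split_ifs <;> ring
    rw [Finset.sum_congr rfl (fun c' _ => point3 c')]
    rw [Finset.sum_add_distrib]
    rw [Finset.sum_add_distrib]
    rw [hsingle p, hsemb]
    have e4 : ∑ c' : Fin (M - 1),
        (-(Cw * α * N)) * ((starRingEnd ℂ) vj * vj) * (w c' * (starRingEnd ℂ) (w c')) =
        (-(Cw * α * N)) * ((starRingEnd ℂ) vj * vj) * ((M : ℂ) - 1) := by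
      rw [← Finset.mul_sum, hsw]
    rw [e4, hu'p, hwp]
    ring
  -- final scalar identity
  have hc1' : (1 + (M : ℂ) * N * α) ≠ 0 := by
    have h : (1 + (M : ℂ) * N * α) = ((1 + (M : ℝ) * N * α : ℝ) : ℂ) := by push_cast; ring
    rw [h]
    exact Complex.ofReal_ne_zero.mpr (by nlinarith)
  have hc2' : (1 + (N : ℂ) * α) ≠ 0 := by
    have h : (1 + (N : ℂ) * α) = ((1 + (N : ℝ) * α : ℝ) : ℂ) := by push_cast; ring
    rw [h]
    exact Complex.ofReal_ne_zero.mpr (by nlinarith)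
  have hCwv : Cw = -((α : ℂ) * N) * (1 / (1 + (α : ℂ) * N * M)) * (1 / (1 + (α : ℂ) * N)) := by
    rw [hCw]
    field_simp
    ring
  have hv1' : (starRingEnd ℂ) vj * vj = 1 := by rw [mul_comm]; exact hv1
  have hfinal : (α : ℂ) * ((N : ℂ) * M - N)
      - (∑ c' : Fin (M - 1), (∑ c : Fin (M - 1), u c * DD c c') * u' c') = ((Γ : ℝ) : ℂ) := by
    rw [hT, hv1, hv1', hCwv]
    have hΓC : ((Γ : ℝ) : ℂ) =
        ((α : ℂ) * M * N - (N : ℂ) * α / (1 + (N : ℂ) * α)) / (1 + (M : ℂ) * N * α) := by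
      rw [hΓ]
      push_cast
      ring
    rw [hΓC]
    field_simp
    ring
  -- assemble the matrix identity
  rw [Matrix.mul_assoc (sSel M N j) F Fᴴ, Matrix.mul_assoc (sBar M N i) F Fᴴ, ← hG]
  rw [hInv]
  ext q q'
  obtain ⟨b1, b2⟩ := q
  obtain ⟨b1', b2'⟩ := q'
  rw [Matrix.sub_apply, Matrix.smul_apply, Matrix.one_apply]
  show (sSel M N j * G * (sSel M N j)ᵀ) b1 b1' * (1 : Matrix (Fin N) (Fin N) ℂ) b2 b2'
    - ((sSel M N j * G * (sBar M N i)ᵀ) * D * (sBar M N i * G * (sSel M N j)ᵀ)) b1 b1'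
        * (1 : Matrix (Fin N) (Fin N) ℂ) b2 b2' = _
  rw [hA b1 b1', hPDR b1 b1']
  have hone : (1 : Matrix (Fin N) (Fin N) ℂ) b2 b2' = if b2 = b2' then 1 else 0 :=
    Matrix.one_apply
  rw [hone]
  simp only [Prod.mk.injEq]
  by_cases hb1 : b1 = b1'
  · by_cases hb2 : b2 = b2'
    · rw [if_pos hb1, if_pos hb1, if_pos hb2, if_pos (And.intro hb1 hb2), mul_one, mul_one,
        smul_eq_mul, mul_one]
      exact hfinal
    · rw [if_neg hb2, if_neg (fun h : b1 = b1' ∧ b2 = b2' => hb2 h.2)]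
      simp only [mul_zero, smul_zero, sub_zero]
  · rw [if_neg hb1, if_neg hb1, if_neg (fun h : b1 = b1' ∧ b2 = b2' => hb1 h.1)]
    simp only [zero_mul, smul_zero, sub_zero]
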